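/- Let v ∈ M_k(ℂ)^d be primitive, i.e., the span of all length-l products v_{μ₀}⋯v_{μ_{l−1}} equals M_k(ℂ) for all sufficiently large l. Suppose e^{it} ∈ ℂ with |e^{it}| = 1, ρ is positive definite, and θ is an anti-unitary on ℂ^k such that v_μ = e^{it} ρ^{-1/2} θ v_μ* θ* ρ^{1/2} for all μ. Then e^{2it} = 1 and ρ^{-1/2} θ ρ^{1/2} θ is a scalar multiple of the identity. -/

import Mathlib

open Matrix
open scoped ComplexOrder

/-- Let `v ∈ M_k(ℂ)^d` be primitive (the span of length-`l` products is all of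
`M_k(ℂ)` for all large `l`), `z` a modulus-one scalar, `ρ` positive definite with
positive square root `r = ρ^{1/2}`, and `θ` an anti-unitary (matrix `A`, so that
`θ x* θ*` has matrix `A * xᵀ * Aᴴ`) with `v_μ = z ρ^{-1/2} θ v_μ* θ* ρ^{1/2}` for
all `μ`. Then `z² = 1` and `ρ^{-1/2} θ ρ^{1/2} θ` (matrix
`r⁻¹ * A * map star r * map star A`) is a scalar multiple of the identity. -/
theorem stmt12 {k ι : Type*} [Fintype k] [DecidableEq k] [Nonempty k] [Fintype ι]
    (v : ι → Matrix k k ℂ)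
    (hprim : ∃ L : ℕ, ∀ l ≥ L,
      Submodule.span ℂ
        {M : Matrix k k ℂ | ∃ μ : Fin l → ι, M = (List.ofFn fun i => v (μ i)).prod}
        = ⊤)
    (z : ℂ) (hz : ‖z‖ = 1)
    (ρ r : Matrix k k ℂ) (hρ : ρ.PosDef) (hr : r.PosDef) (hr2 : r * r = ρ)
    (A : Matrix k k ℂ) (hA : A ∈ Matrix.unitaryGroup k ℂ)
    (hrel : ∀ μ, v μ = z • (r⁻¹ * (A * (v μ)ᵀ * Aᴴ) * r)) :
    z ^ 2 = 1 ∧ ∃ b : ℂ, r⁻¹ * A * r.map star * A.map star = b • 1 := by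
  set T : Matrix k k ℂ := r⁻¹ * A * r.map star * A.map star with hT
  -- basic facts
  have hrdet : IsUnit r.det := (Matrix.isUnit_iff_isUnit_det r).mp hr.isUnit
  have hrms : r.map star = rᵀ := by
    ext i j
    rw [Matrix.map_apply, Matrix.transpose_apply, ← Matrix.conjTranspose_apply,
      hr.isHermitian.eq]
  have hrtdet : IsUnit rᵀ.det := by rwa [Matrix.det_transpose]
  have hAH : A * Aᴴ = 1 := Matrix.mem_unitaryGroup_iff.mp hA
  have hHA : Aᴴ * A = 1 := Matrix.mem_unitaryGroup_iff'.mp hA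
  have hAms : (Aᴴ)ᵀ = A.map star := by
    ext i j; simp [Matrix.conjTranspose_apply]
  have hmsA : A.map star * Aᵀ = 1 := by
    have := congrArg Matrix.transpose hAH
    rwa [Matrix.transpose_mul, hAms, Matrix.transpose_one] at this
  have hAtms : Aᵀ * A.map star = 1 := by
    have := congrArg Matrix.transpose hHA
    rwa [Matrix.transpose_mul, hAms, Matrix.transpose_one] at this
  -- cancellation lemmas in right-assoc form
  have c1 : ∀ X : Matrix k k ℂ, r * (r⁻¹ * X) = X := fun X => by
    rw [← Matrix.mul_assoc, Matrix.mul_nonsing_inv _ hrdet, Matrix.one_mul]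
  have c2 : ∀ X : Matrix k k ℂ, r⁻¹ * (r * X) = X := fun X => by
    rw [← Matrix.mul_assoc, Matrix.nonsing_inv_mul _ hrdet, Matrix.one_mul]
  have c3 : ∀ X : Matrix k k ℂ, (rᵀ)⁻¹ * (rᵀ * X) = X := fun X => by
    rw [← Matrix.mul_assoc, Matrix.nonsing_inv_mul _ hrtdet, Matrix.one_mul]
  have c4 : ∀ X : Matrix k k ℂ, rᵀ * ((rᵀ)⁻¹ * X) = X := fun X => by
    rw [← Matrix.mul_assoc, Matrix.mul_nonsing_inv _ hrtdet, Matrix.one_mul]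
  have c5 : ∀ X : Matrix k k ℂ, A * (Aᴴ * X) = X := fun X => by
    rw [← Matrix.mul_assoc, hAH, Matrix.one_mul]
  have c6 : ∀ X : Matrix k k ℂ, Aᴴ * (A * X) = X := fun X => by
    rw [← Matrix.mul_assoc, hHA, Matrix.one_mul]
  have c7 : ∀ X : Matrix k k ℂ, A.map star * (Aᵀ * X) = X := fun X => by
    rw [← Matrix.mul_assoc, hmsA, Matrix.one_mul]
  have c8 : ∀ X : Matrix k k ℂ, Aᵀ * (A.map star * X) = X := fun X => by
    rw [← Matrix.mul_assoc, hAtms, Matrix.one_mul]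
  -- T is invertible: T * S = 1
  have hTS : T * (Aᵀ * ((rᵀ)⁻¹ * (Aᴴ * r))) = 1 := by
    rw [hT, hrms]
    simp only [Matrix.mul_assoc, c7, c4, c5, Matrix.nonsing_inv_mul _ hrdet]
  have hTne : T ≠ 0 := by
    intro h0
    rw [h0, Matrix.zero_mul] at hTS
    exact zero_ne_one hTS
  -- key relation
  have hkey : ∀ μ, v μ * T = z ^ 2 • (T * v μ) := by
    intro μ
    have h1 := hrel μ
    have h2 : (v μ)ᵀ = z • (rᵀ * ((Aᴴ)ᵀ * (v μ * (Aᵀ * (rᵀ)⁻¹)))) := by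
      conv_lhs => rw [h1]
      rw [Matrix.transpose_smul]
      congr 1
      simp only [Matrix.transpose_mul, Matrix.transpose_transpose,
        Matrix.transpose_nonsing_inv, Matrix.mul_assoc]
    conv_lhs => rw [h1]; rw [h2]
    rw [hT, hrms, pow_two]
    simp only [Matrix.smul_mul, Matrix.mul_smul, smul_smul, Matrix.mul_assoc, hAms,
      c1, c2, c3, c4, c5, c6, c7, c8]
    simp only [hAtms, Matrix.mul_one]
  -- products of generators
  have hlist : ∀ l : List ι, (l.map v).prod * T
      = (z ^ 2) ^ l.length • (T * (l.map v).prod) := by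
    intro l
    induction l with
    | nil => simp
    | cons a t ih =>
      rw [List.map_cons, List.prod_cons, List.length_cons, Matrix.mul_assoc, ih,
        mul_smul_comm, ← Matrix.mul_assoc, hkey a, smul_mul_assoc, smul_smul,
        Matrix.mul_assoc, pow_succ (z ^ 2) t.length]
  obtain ⟨L, hL⟩ := hprim
  -- all matrices satisfy the twisted commutation for l ≥ L
  have hall : ∀ l ≥ L, ∀ M : Matrix k k ℂ, M * T = (z ^ 2) ^ l • (T * M) := by
    intro l hl M
    set f : Matrix k k ℂ →ₗ[ℂ] Matrix k k ℂ :=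
      LinearMap.mulRight ℂ T - (z ^ 2) ^ l • LinearMap.mulLeft ℂ T with hf
    have hsub : {M : Matrix k k ℂ | ∃ μ : Fin l → ι,
        M = (List.ofFn fun i => v (μ i)).prod} ⊆ (LinearMap.ker f : Set _) := by
      rintro M ⟨μ, rfl⟩
      have : (List.ofFn fun i => v (μ i)) = (List.ofFn μ).map v :=
        (List.map_ofFn (f := μ) (g := v)).symm
      rw [SetLike.mem_coe, LinearMap.mem_ker, hf, LinearMap.sub_apply,
        LinearMap.smul_apply, LinearMap.mulRight_apply, LinearMap.mulLeft_apply, this,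
        sub_eq_zero, hlist, List.length_ofFn]
    have hker : Submodule.span ℂ _ ≤ LinearMap.ker f := Submodule.span_le.mpr hsub
    rw [hL l hl] at hker
    have := hker (Submodule.mem_top : M ∈ ⊤)
    rw [LinearMap.mem_ker, hf, LinearMap.sub_apply, LinearMap.smul_apply,
      LinearMap.mulRight_apply, LinearMap.mulLeft_apply, sub_eq_zero] at this
    exact this
  -- extract scalar equations
  have hone : ∀ l ≥ L, (z ^ 2) ^ l = 1 := by
    intro l hl
    have h := hall l hl 1
    rw [Matrix.one_mul, Matrix.mul_one] at h
    have h2 : ((z ^ 2) ^ l - 1) • T = 0 := by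
      rw [sub_smul, one_smul, ← h, sub_self]
    rcases smul_eq_zero.mp h2 with h3 | h3
    · exact sub_eq_zero.mp h3
    · exact absurd h3 hTne
  have hz2 : z ^ 2 = 1 := by
    have e1 := hone L le_rfl
    have e2 := hone (L + 1) (Nat.le_succ_of_le le_rfl)
    rw [pow_succ, e1, one_mul] at e2
    exact e2
  refine ⟨hz2, ?_⟩
  have hcomm : ∀ M : Matrix k k ℂ, M * T = T * M := by
    intro M
    have := hall L le_rfl M
    rwa [hone L le_rfl, one_smul] at this
  obtain ⟨b, hb⟩ := Matrix.mem_range_scalar_of_commute_single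
    (M := T) (fun i j _ => hcomm _)
  refine ⟨b, ?_⟩
  show T = b • 1
  rw [← hb, Matrix.scalar_apply, Matrix.smul_one_eq_diagonal]
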